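/- For the Shepard operator with exponent p > 2 and f : [−1,1] → ℝ Lipschitz continuous, there is a constant c (depending on p and the Lipschitz constant of f) such that max_{|x|≤1} |f(x) − R_n(f,x)| ≤ c/n for all n ≥ 1. -/

import Mathlib

open Real Classical

/-- The Shepard operator with exponent `p` on `[-1,1]`, based on the
equidistant nodes `k/n`, `|k| ≤ n`, extended by the node values of `f`. -/
noncomputable def shepard (n : ℕ) (p : ℝ) (f : ℝ → ℝ) (x : ℝ) : ℝ :=
  if ∃ j : ℤ, |j| ≤ (n : ℤ) ∧ x = (j : ℝ) / n then f x
  else (∑ k ∈ Finset.Icc (-(n : ℤ)) (n : ℤ), f ((k : ℝ) / n) * |x - (k : ℝ) / n| ^ (-p)) /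
    (∑ k ∈ Finset.Icc (-(n : ℤ)) (n : ℤ), |x - (k : ℝ) / n| ^ (-p))

/-- For `p > 2` and Lipschitz `f` on `[-1,1]`, there is a constant `c`
(depending only on `p` and the Lipschitz constant `L`) such that
`max_{|x|≤1} |f(x) - R_n(f,x)| ≤ c/n` for all `n ≥ 1`. -/
theorem shepard_lipschitz_rate (p : ℝ) (hp : 2 < p) (L : ℝ) :
    ∃ c : ℝ, ∀ f : ℝ → ℝ,
      (∀ x ∈ Set.Icc (-1 : ℝ) 1, ∀ y ∈ Set.Icc (-1 : ℝ) 1, |f x - f y| ≤ L * |x - y|) →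
      ∀ n : ℕ, 1 ≤ n → ∀ x ∈ Set.Icc (-1 : ℝ) 1,
        |f x - shepard n p f x| ≤ c / n := by
  -- the tail constant
  have hsum : Summable (fun m : ℤ => |(m : ℝ)| ^ (1 - p)) := by
    have h := Real.summable_abs_int_rpow (b := p - 1) (by linarith)
    convert h using 2 with m
    ring_nf
  set Z : ℝ := ∑' m : ℤ, |(m : ℝ)| ^ (1 - p) with hZdef
  have hZ0 : 0 ≤ Z := tsum_nonneg (fun m => Real.rpow_nonneg (abs_nonneg _) _)
  refine ⟨|L| * (1 + Z), ?_⟩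
  intro f hf n hn x hx
  have hn0 : (0 : ℝ) < n := by exact_mod_cast Nat.lt_of_lt_of_le Nat.zero_lt_one hn
  have hc0 : (0 : ℝ) ≤ |L| * (1 + Z) / n := by positivity
  have hL : 0 ≤ L := by
    have := hf 1 (by norm_num) 0 (by norm_num)
    simp only [sub_zero, abs_one, mul_one] at this
    exact le_trans (abs_nonneg _) this
  by_cases hnode : ∃ j : ℤ, |j| ≤ (n : ℤ) ∧ x = (j : ℝ) / n
  · rw [shepard, if_pos hnode]
    simpa using hc0
  rw [shepard, if_neg hnode]
  set F : Finset ℤ := Finset.Icc (-(n : ℤ)) (n : ℤ) with hF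
  have hmemF : ∀ k : ℤ, k ∈ F ↔ |k| ≤ (n : ℤ) := by
    intro k; rw [hF, Finset.mem_Icc, abs_le]
  have hxk : ∀ k ∈ F, x ≠ (k : ℝ) / n := by
    intro k hk hxe
    exact hnode ⟨k, (hmemF k).mp hk, hxe⟩
  have hdpos : ∀ k ∈ F, 0 < |x - (k : ℝ) / n| := by
    intro k hk
    exact abs_pos.mpr (sub_ne_zero.mpr (hxk k hk))
  have hwpos : ∀ k ∈ F, (0 : ℝ) < |x - (k : ℝ) / n| ^ (-p) := fun k hk =>
    Real.rpow_pos_of_pos (hdpos k hk) _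
  have hden : (0 : ℝ) < ∑ k ∈ F, |x - (k : ℝ) / n| ^ (-p) := by
    refine Finset.sum_pos hwpos ⟨0, ?_⟩
    rw [hmemF]; simpa using Int.ofNat_nonneg n
  set D : ℝ := ∑ k ∈ F, |x - (k : ℝ) / n| ^ (-p) with hD
  -- the nearest node
  set k0 : ℤ := round ((n : ℝ) * x) with hk0def
  obtain ⟨hx1, hx2⟩ := hx
  have hxabs : |x| ≤ 1 := abs_le.mpr ⟨hx1, hx2⟩
  have hk0n : k0 ∈ F := by
    rw [hmemF]
    have h1 : |(k0 : ℝ) - (n : ℝ) * x| ≤ 1 / 2 := by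
      simpa [abs_sub_comm] using abs_sub_round ((n : ℝ) * x)
    have h2 : |(n : ℝ) * x| ≤ n := by
      rw [abs_mul, abs_of_pos hn0]
      nlinarith
    have h3 : |(k0 : ℝ)| < (n : ℝ) + 1 := by
      calc |(k0 : ℝ)| ≤ |(k0 : ℝ) - (n : ℝ) * x| + |(n : ℝ) * x| := by
            simpa using abs_add_le ((k0 : ℝ) - (n : ℝ) * x) ((n : ℝ) * x)
        _ < (n : ℝ) + 1 := by linarith
    have : |k0| < (n : ℤ) + 1 := by exact_mod_cast (by push_cast; exact h3 : (|k0| : ℝ) < (n : ℤ) + 1)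
    omega
  have hd0 : |x - (k0 : ℝ) / n| ≤ 1 / (2 * n) := by
    have h1 : |(n : ℝ) * x - (k0 : ℝ)| ≤ 1 / 2 := abs_sub_round ((n : ℝ) * x)
    have : x - (k0 : ℝ) / n = ((n : ℝ) * x - k0) / n := by field_simp
    rw [this, abs_div, abs_of_pos hn0, div_le_div_iff₀ hn0 (by positivity)]
    calc |(n : ℝ) * x - (k0 : ℝ)| * (2 * n) ≤ (1 / 2) * (2 * n) := by
          exact mul_le_mul_of_nonneg_right h1 (by positivity)
      _ = 1 * n := by ring
  set d0 : ℝ := |x - (k0 : ℝ) / n| with hd0def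
  have hd0pos : 0 < d0 := hdpos k0 hk0n
  -- distance lower bound for other nodes
  have hdist : ∀ k ∈ F, k ≠ k0 → |(k : ℝ) - (k0 : ℝ)| / (2 * (n : ℝ)) ≤ |x - (k : ℝ) / n| := by
    intro k hk hne
    have h1 : (1 : ℝ) ≤ |(k : ℝ) - (k0 : ℝ)| := by
      have h' : (1 : ℤ) ≤ |k - k0| := Int.one_le_abs (sub_ne_zero.mpr hne)
      have h'' : (1 : ℝ) ≤ ((|k - k0| : ℤ) : ℝ) := by exact_mod_cast h'
      rwa [Int.cast_abs, Int.cast_sub] at h''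
    have h2 : |(k : ℝ) / n - (k0 : ℝ) / n| = |(k : ℝ) - (k0 : ℝ)| / n := by
      rw [div_sub_div_same, abs_div, abs_of_pos hn0]
    have h3 : |(k : ℝ) / n - (k0 : ℝ) / n| ≤ |x - (k : ℝ) / n| + d0 := by
      calc |(k : ℝ) / n - (k0 : ℝ) / n| ≤ |(k : ℝ) / n - x| + |x - (k0 : ℝ) / n| :=
            abs_sub_le _ _ _
        _ = |x - (k : ℝ) / n| + d0 := by rw [abs_sub_comm]
    have h4 : |(k : ℝ) - (k0 : ℝ)| / (n : ℝ) - 1 / (2 * n) ≤ |x - (k : ℝ) / n| := by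
      rw [← h2]; linarith
    have h5 : |(k : ℝ) - (k0 : ℝ)| / (2 * (n : ℝ)) ≤ |(k : ℝ) - (k0 : ℝ)| / (n : ℝ) - 1 / (2 * n) := by
      rw [div_sub_div _ _ (ne_of_gt hn0) (by positivity : (0:ℝ) < 2 * n).ne',
        div_le_div_iff₀ (by positivity) (by positivity)]
      nlinarith [mul_le_mul_of_nonneg_left h1 (le_of_lt (mul_pos hn0 hn0))]
    linarith
  -- rewrite the difference
  have hnum : f x - (∑ k ∈ F, f ((k : ℝ) / n) * |x - (k : ℝ) / n| ^ (-p)) / D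
      = (∑ k ∈ F, (f x - f ((k : ℝ) / n)) * |x - (k : ℝ) / n| ^ (-p)) / D := by
    have expand : ∑ k ∈ F, (f x - f ((k : ℝ) / n)) * |x - (k : ℝ) / n| ^ (-p)
        = f x * D - ∑ k ∈ F, f ((k : ℝ) / n) * |x - (k : ℝ) / n| ^ (-p) := by
      rw [hD, Finset.mul_sum, ← Finset.sum_sub_distrib]
      exact Finset.sum_congr rfl fun k _ => by ring
    rw [expand, sub_div, mul_div_assoc, div_self (ne_of_gt hden), mul_one]
  rw [hnum, abs_div, abs_of_pos hden]
  -- bound the numerator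
  have hnodemem : ∀ k ∈ F, (k : ℝ) / n ∈ Set.Icc (-1 : ℝ) 1 := by
    intro k hk
    have h1 : |k| ≤ (n : ℤ) := (hmemF k).mp hk
    have h2 : |(k : ℝ)| ≤ (n : ℝ) := by exact_mod_cast h1
    rw [Set.mem_Icc] at *
    have h3 : |(k : ℝ) / n| ≤ 1 := by
      rw [abs_div, abs_of_pos hn0, div_le_one hn0]; exact h2
    exact abs_le.mp h3
  have hrw : ∀ k ∈ F, |x - (k : ℝ) / n| * |x - (k : ℝ) / n| ^ (-p)
      = |x - (k : ℝ) / n| ^ (1 - p) := by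
    intro k hk
    rw [show (1 : ℝ) - p = 1 + (-p) by ring, Real.rpow_add (hdpos k hk), Real.rpow_one]
  have hnumle : |∑ k ∈ F, (f x - f ((k : ℝ) / n)) * |x - (k : ℝ) / n| ^ (-p)|
      ≤ L * ∑ k ∈ F, |x - (k : ℝ) / n| ^ (1 - p) := by
    calc |∑ k ∈ F, (f x - f ((k : ℝ) / n)) * |x - (k : ℝ) / n| ^ (-p)|
        ≤ ∑ k ∈ F, |(f x - f ((k : ℝ) / n)) * |x - (k : ℝ) / n| ^ (-p)| :=
          Finset.abs_sum_le_sum_abs _ _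
      _ ≤ ∑ k ∈ F, L * |x - (k : ℝ) / n| ^ (1 - p) := by
          apply Finset.sum_le_sum
          intro k hk
          rw [abs_mul, abs_of_pos (hwpos k hk), ← hrw k hk, ← mul_assoc]
          exact mul_le_mul_of_nonneg_right
            (hf x ⟨hx1, hx2⟩ ((k : ℝ) / n) (hnodemem k hk)) (le_of_lt (hwpos k hk))
      _ = L * ∑ k ∈ F, |x - (k : ℝ) / n| ^ (1 - p) := by rw [Finset.mul_sum]
  -- key estimate: numerator sum against a multiple of the denominator
  have hkey : ∑ k ∈ F, |x - (k : ℝ) / n| ^ (1 - p) ≤ (1 + Z) / (2 * n) * D := by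
    have hstep1 : ∑ k ∈ F, |x - (k : ℝ) / n| ^ (1 - p)
        = d0 ^ (1 - p) + ∑ k ∈ F.erase k0, |x - (k : ℝ) / n| ^ (1 - p) := by
      rw [← Finset.add_sum_erase _ _ hk0n]
    -- bound each erased term
    have hterm : ∀ k ∈ F.erase k0, |x - (k : ℝ) / n| ^ (1 - p)
        ≤ (2 * (n : ℝ)) ^ (p - 1) * |(k : ℝ) - (k0 : ℝ)| ^ (1 - p) := by
      intro k hk
      obtain ⟨hne, hkF⟩ := Finset.mem_erase.mp hk
      have h1 : |(k : ℝ) - (k0 : ℝ)| / (2 * (n : ℝ)) ≤ |x - (k : ℝ) / n| := hdist k hkF hne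
      have habs1 : (0 : ℝ) < |(k : ℝ) - (k0 : ℝ)| := by
        rw [abs_pos, sub_ne_zero]
        exact_mod_cast hne
      have hqpos : (0 : ℝ) < |(k : ℝ) - (k0 : ℝ)| / (2 * (n : ℝ)) := by positivity
      calc |x - (k : ℝ) / n| ^ (1 - p)
          ≤ (|(k : ℝ) - (k0 : ℝ)| / (2 * (n : ℝ))) ^ (1 - p) :=
            Real.rpow_le_rpow_of_nonpos hqpos h1 (by linarith)
        _ = |(k : ℝ) - (k0 : ℝ)| ^ (1 - p) / (2 * (n : ℝ)) ^ (1 - p) :=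
            Real.div_rpow (abs_nonneg _) (by positivity) _
        _ = (2 * (n : ℝ)) ^ (p - 1) * |(k : ℝ) - (k0 : ℝ)| ^ (1 - p) := by
            rw [show (1 : ℝ) - p = -(p - 1) by ring,
              Real.rpow_neg (by positivity : (0:ℝ) ≤ 2 * (n:ℝ)) (p - 1), div_inv_eq_mul]
            ring
    have hsum2 : ∑ k ∈ F.erase k0, |(k : ℝ) - (k0 : ℝ)| ^ (1 - p) ≤ Z := by
      have hcast : ∀ k : ℤ, |(k : ℝ) - (k0 : ℝ)| = |((k - k0 : ℤ) : ℝ)| := by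
        intro k; push_cast; ring_nf
      have himg : ∑ k ∈ F.erase k0, |((k - k0 : ℤ) : ℝ)| ^ (1 - p)
          = ∑ m ∈ (F.erase k0).image (· - k0), |(m : ℝ)| ^ (1 - p) := by
        rw [Finset.sum_image]
        intro a _ b _ hab
        have hab' : a - k0 = b - k0 := hab
        omega
      calc ∑ k ∈ F.erase k0, |(k : ℝ) - (k0 : ℝ)| ^ (1 - p)
          = ∑ k ∈ F.erase k0, |((k - k0 : ℤ) : ℝ)| ^ (1 - p) := by
            exact Finset.sum_congr rfl fun k _ => by rw [hcast k]
        _ = ∑ m ∈ (F.erase k0).image (· - k0), |(m : ℝ)| ^ (1 - p) := himg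
        _ ≤ Z := Summable.sum_le_tsum _ (fun m _ => Real.rpow_nonneg (abs_nonneg _) _) hsum
    have hstep2 : ∑ k ∈ F.erase k0, |x - (k : ℝ) / n| ^ (1 - p)
        ≤ (2 * (n : ℝ)) ^ (p - 1) * Z := by
      calc ∑ k ∈ F.erase k0, |x - (k : ℝ) / n| ^ (1 - p)
          ≤ ∑ k ∈ F.erase k0, (2 * (n : ℝ)) ^ (p - 1) * |(k : ℝ) - (k0 : ℝ)| ^ (1 - p) :=
            Finset.sum_le_sum hterm
        _ = (2 * (n : ℝ)) ^ (p - 1) * ∑ k ∈ F.erase k0, |(k : ℝ) - (k0 : ℝ)| ^ (1 - p) := by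
            rw [Finset.mul_sum]
        _ ≤ (2 * (n : ℝ)) ^ (p - 1) * Z :=
            mul_le_mul_of_nonneg_left hsum2 (le_of_lt (Real.rpow_pos_of_pos
              (by positivity) _))
    -- lower bound for D
    have hDlb : d0 ^ (-p) ≤ D := by
      rw [hD, hd0def]
      exact Finset.single_le_sum (fun k hk => le_of_lt (hwpos k hk)) hk0n
    have hd0lb : (2 * (n : ℝ)) ^ p ≤ d0 ^ (-p) := by
      have h1 : d0 ^ (-p) ≥ (1 / (2 * (n : ℝ))) ^ (-p) :=
        Real.rpow_le_rpow_of_nonpos hd0pos hd0 (by linarith)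
      calc (2 * (n : ℝ)) ^ p = ((2 * (n : ℝ)) ^ (-1 : ℝ)) ^ (-p) := by
            rw [← Real.rpow_mul (by positivity)]; norm_num
        _ = (1 / (2 * (n : ℝ))) ^ (-p) := by rw [Real.rpow_neg_one, one_div]
        _ ≤ d0 ^ (-p) := h1
    -- first piece
    have hpiece1 : d0 ^ (1 - p) ≤ 1 / (2 * n) * d0 ^ (-p) := by
      have : d0 ^ (1 - p) = d0 * d0 ^ (-p) := by
        rw [show (1 : ℝ) - p = 1 + (-p) by ring, Real.rpow_add hd0pos, Real.rpow_one]
      rw [this]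
      exact mul_le_mul_of_nonneg_right hd0 (le_of_lt (Real.rpow_pos_of_pos hd0pos _))
    -- second piece
    have hpiece2 : (2 * (n : ℝ)) ^ (p - 1) * Z ≤ Z / (2 * n) * d0 ^ (-p) := by
      have h1 : (2 * (n : ℝ)) ^ (p - 1) = (2 * (n : ℝ)) ^ p / (2 * n) := by
        rw [Real.rpow_sub (by positivity), Real.rpow_one]
      rw [h1]
      calc (2 * (n : ℝ)) ^ p / (2 * n) * Z ≤ d0 ^ (-p) / (2 * n) * Z := by
            apply mul_le_mul_of_nonneg_right _ hZ0
            gcongr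
        _ = Z / (2 * n) * d0 ^ (-p) := by ring
    calc ∑ k ∈ F, |x - (k : ℝ) / n| ^ (1 - p)
        ≤ 1 / (2 * n) * d0 ^ (-p) + Z / (2 * n) * d0 ^ (-p) := by
          rw [hstep1]; exact add_le_add hpiece1 (le_trans hstep2 hpiece2)
      _ = (1 + Z) / (2 * n) * d0 ^ (-p) := by ring
      _ ≤ (1 + Z) / (2 * n) * D := by
          apply mul_le_mul_of_nonneg_left hDlb (by positivity)
  -- finish
  calc |∑ k ∈ F, (f x - f ((k : ℝ) / n)) * |x - (k : ℝ) / n| ^ (-p)| / D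
      ≤ (L * ((1 + Z) / (2 * n) * D)) / D := by
        gcongr
        exact le_trans hnumle (mul_le_mul_of_nonneg_left hkey hL)
    _ = L * (1 + Z) / (2 * n) := by
        rw [mul_div_assoc, mul_div_assoc, div_self (ne_of_gt hden), mul_one]
        ring
    _ = (L * (1 + Z) / n) / 2 := by ring
    _ ≤ L * (1 + Z) / n := by
        have hnn : 0 ≤ L * (1 + Z) / n := by positivity
        linarith
    _ = |L| * (1 + Z) / n := by rw [abs_of_nonneg hL]
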